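/- Let μ > 0 and let n > k ≥ 1 be integers. On a probability space, let S, X_1, …, X_{n−1} be mutually independent random variables, each exponentially distributed with rate μ. Let X_{(k)} denote the k-th smallest value among X_1, …, X_{n−1}, and define T = min(S, X_{(k)}). Then E[T] = k/(nμ). -/

import Mathlib

open MeasureTheory ProbabilityTheory

/-- The `k`-th smallest value among `Y 0, …, Y (n-1)` (the `k`-th order statistic),
obtained by sorting the multiset of values in nondecreasing order and taking the
`(k-1)`-th entry. -/
noncomputable def kthSmallest {n : ℕ} (Y : Fin n → ℝ) (k : ℕ) : ℝ :=
  ((Multiset.map Y Finset.univ.val).sort (· ≤ ·)).getD (k - 1) 0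

namespace MDSaux

open Finset Real Set

lemma alt_sum : ∀ (j : ℕ) (a : ℝ), 0 < a →
    ∑ i ∈ Finset.range (j+1), (-1:ℝ)^i * (j.choose i) / (a + i)
      = (j.factorial : ℝ) / ∏ i ∈ Finset.range (j+1), (a + i) := by
  intro j
  induction j with
  | zero => intro a ha; simp
  | succ j ih =>
    intro a ha
    have ih1 := ih a ha
    have ih2 := ih (a+1) (by linarith)
    have hP1 : (0:ℝ) < ∏ i ∈ Finset.range (j+1), (a + i) :=
      Finset.prod_pos (fun i _ => by positivity)
    have hP2 : (0:ℝ) < ∏ i ∈ Finset.range (j+1), ((a+1) + i) :=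
      Finset.prod_pos (fun i _ => by positivity)
    have hQ : (0:ℝ) < ∏ i ∈ Finset.range (j+2), (a + i) :=
      Finset.prod_pos (fun i _ => by positivity)
    have key : ∑ i ∈ Finset.range (j+2), (-1:ℝ)^i * ((j+1).choose i) / (a + i)
        = (∑ i ∈ Finset.range (j+1), (-1:ℝ)^i * (j.choose i) / (a + i))
          - ∑ i ∈ Finset.range (j+1), (-1:ℝ)^i * (j.choose i) / ((a+1) + i) := by
      rw [Finset.sum_range_succ' (fun i => (-1:ℝ)^i * ((j+1).choose i) / (a + i)) (j+1)]
      rw [Finset.sum_range_succ' (fun i => (-1:ℝ)^i * (j.choose i) / (a + i)) j]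
      have hext : ∑ i ∈ Finset.range j, (-1:ℝ)^(i+1) * (j.choose (i+1)) / (a + ((i+1 : ℕ) : ℝ))
          = ∑ i ∈ Finset.range (j+1), (-1:ℝ)^(i+1) * (j.choose (i+1)) / (a + ((i+1 : ℕ) : ℝ)) := by
        rw [Finset.sum_range_succ]
        simp [Nat.choose_succ_self]
      rw [hext]
      have hterm : ∀ i ∈ Finset.range (j+1),
          (-1:ℝ)^(i+1) * (((j+1).choose (i+1) : ℕ) : ℝ) / (a + ((i+1 : ℕ) : ℝ))
          = ((-1:ℝ)^(i+1) * ((j.choose (i+1) : ℕ) : ℝ) / (a + ((i+1 : ℕ) : ℝ))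
            - (-1:ℝ)^i * ((j.choose i : ℕ) : ℝ) / ((a+1) + (i : ℝ))) := by
        intro i _
        rw [Nat.choose_succ_succ]
        have hne1 : a + ((i:ℝ)+1) ≠ 0 := by positivity
        have hne2 : (a+1) + (i:ℝ) ≠ 0 := by positivity
        push_cast
        field_simp
        ring
      rw [Finset.sum_congr rfl hterm, Finset.sum_sub_distrib]
      simp only [Nat.choose_zero_right]
      push_cast
      ring
    rw [key, ih1, ih2]
    have hQ1 : ∏ i ∈ Finset.range (j+2), (a + i)
        = (∏ i ∈ Finset.range (j+1), (a + i)) * (a + ((j:ℝ)+1)) := by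
      rw [Finset.prod_range_succ]; push_cast; ring
    have hQ2 : ∏ i ∈ Finset.range (j+2), (a + i)
        = (∏ i ∈ Finset.range (j+1), ((a+1) + i)) * a := by
      rw [Finset.prod_range_succ' (fun i => (a + (i:ℝ)))]
      congr 1
      · exact Finset.prod_congr rfl (fun i _ => by push_cast; ring)
      · norm_num
    rw [div_sub_div _ _ hP1.ne' hP2.ne', div_eq_div_iff (by positivity) hQ.ne']
    push_cast [Nat.factorial_succ]
    linear_combination ((j.factorial : ℝ) * ∏ i ∈ Finset.range (j+1), ((a+1) + i)) * hQ1
      - ((∏ i ∈ Finset.range (j+1), (a + i)) * (j.factorial : ℝ)) * hQ2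

lemma prod_fact : ∀ (j : ℕ) {a : ℕ}, 0 < a →
    (∏ i ∈ Finset.range (j+1), (a+i)) * (a-1).factorial = (a+j).factorial := by
  intro j
  induction j with
  | zero => intro a ha; simpa using Nat.mul_factorial_pred ha.ne'
  | succ j ih =>
    intro a ha
    rw [Finset.prod_range_succ, mul_right_comm, ih ha, show a+(j+1) = (a+j)+1 by ring,
      Nat.factorial_succ]
    ring

lemma coeff_eq {μ : ℝ} (hμ : 0 < μ) {n k j : ℕ} (hj : j < k) (hkn : k < n) :
    ((n-1).choose j : ℝ) * ∑ i ∈ Finset.range (j+1), (-1:ℝ)^i * (j.choose i) / (((n-j+i:ℕ):ℝ)*μ)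
      = 1/((n:ℝ)*μ) := by
  have hjn : j < n := lt_trans hj hkn
  have ha : (0:ℝ) < ((n-j:ℕ):ℝ) := by exact_mod_cast Nat.sub_pos_of_lt hjn
  have h1 : ∑ i ∈ Finset.range (j+1), (-1:ℝ)^i * (j.choose i) / (((n-j+i:ℕ):ℝ)*μ)
      = (1/μ) * ∑ i ∈ Finset.range (j+1), (-1:ℝ)^i * (j.choose i) / (((n-j:ℕ):ℝ) + i) := by
    rw [Finset.mul_sum]
    refine Finset.sum_congr rfl (fun i hi => ?_)
    have hcast : ((n-j+i:ℕ):ℝ) = ((n-j:ℕ):ℝ) + i := by push_cast; ring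
    have hne : ((n-j:ℕ):ℝ) + i ≠ 0 := by positivity
    rw [hcast, div_mul_eq_div_div, one_div, inv_mul_eq_div]
  rw [h1, alt_sum j _ ha]
  have hPcast : ∏ i ∈ Finset.range (j+1), (((n-j:ℕ):ℝ) + i)
      = ((∏ i ∈ Finset.range (j+1), (n-j+i) : ℕ) : ℝ) := by
    rw [Nat.cast_prod]
    exact Finset.prod_congr rfl (fun i _ => by push_cast; ring)
  have hnat : (∏ i ∈ Finset.range (j+1), (n-j+i)) * (n-1-j).factorial = n.factorial := by
    have h := prod_fact j (Nat.sub_pos_of_lt hjn)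
    rw [show n-j+j = n by omega, show n-j-1 = n-1-j by omega] at h
    exact h
  have hchoose : ((n-1).choose j) * j.factorial * (n-1-j).factorial = (n-1).factorial :=
    Nat.choose_mul_factorial_mul_factorial (by omega)
  have hnfact : n * (n-1).factorial = n.factorial := Nat.mul_factorial_pred (by omega)
  have key : ((n-1).choose j) * j.factorial * n = ∏ i ∈ Finset.range (j+1), (n-j+i) := by
    apply Nat.eq_of_mul_eq_mul_right (Nat.factorial_pos (n-1-j))
    calc ((n-1).choose j * j.factorial * n) * (n-1-j).factorial
        = ((n-1).choose j * j.factorial * (n-1-j).factorial) * n := by ring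
      _ = (n-1).factorial * n := by rw [hchoose]
      _ = n.factorial := by rw [← hnfact]; ring
      _ = (∏ i ∈ Finset.range (j+1), (n-j+i)) * (n-1-j).factorial := hnat.symm
  have keyR : ((n-1).choose j : ℝ) * (j.factorial : ℝ) * n
      = ((∏ i ∈ Finset.range (j+1), (n-j+i) : ℕ) : ℝ) := by
    exact_mod_cast congrArg (Nat.cast (R := ℝ)) key
  rw [hPcast]
  have hP0 : (0:ℝ) < ((∏ i ∈ Finset.range (j+1), (n-j+i) : ℕ) : ℝ) := by
    rw [← hPcast]; exact Finset.prod_pos (fun i _ => by positivity)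
  have hn0 : (0:ℝ) < (n:ℝ) := by exact_mod_cast Nat.zero_lt_of_lt hjn
  field_simp
  linear_combination keyR

lemma sorted_countP_lt_iff {l : List ℝ} (hl : l.Pairwise (· ≤ ·)) {k : ℕ} (hk1 : 1 ≤ k)
    (hlen : k - 1 < l.length) (t : ℝ) :
    t < l.get ⟨k-1, hlen⟩ ↔ l.countP (fun x => decide (x ≤ t)) < k := by
  constructor
  · intro h
    have hsplit : l.countP (fun x => decide (x ≤ t))
        = (l.take (k-1)).countP (fun x => decide (x ≤ t))
          + (l.drop (k-1)).countP (fun x => decide (x ≤ t)) := by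
      conv_lhs => rw [← List.take_append_drop (k-1) l]
      rw [List.countP_append]
    have h2 : (l.drop (k-1)).countP (fun x => decide (x ≤ t)) = 0 := by
      rw [List.countP_eq_zero]
      intro x hx
      obtain ⟨i, hi⟩ := List.mem_iff_get.mp hx
      have hdl : (l.drop (k-1)).length = l.length - (k-1) := List.length_drop
      have hi2 : (i : ℕ) < l.length - (k-1) := by rw [← hdl]; exact i.2
      have hget : x = l.get ⟨(k-1) + i.1, by omega⟩ := by
        rw [← hi]; simp
      have hle : l.get ⟨k-1, hlen⟩ ≤ x := by
        rw [hget]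
        exact hl.rel_get_of_le (by simp)
      simp only [decide_eq_true_eq]
      linarith
    have h1 : (l.take (k-1)).countP (fun x => decide (x ≤ t)) ≤ k - 1 := by
      calc _ ≤ (l.take (k-1)).length := List.countP_le_length
      _ ≤ k - 1 := by simp [List.length_take]
    omega
  · intro h
    by_contra hcon
    push_neg at hcon
    have hkl : k ≤ l.length := by omega
    have htake : (l.take k).countP (fun x => decide (x ≤ t)) = k := by
      rw [List.countP_eq_length.mpr, List.length_take, min_eq_left hkl]
      intro x hx
      obtain ⟨i, hi⟩ := List.mem_iff_get.mp hx
      have hdl : (l.take k).length = min k l.length := List.length_take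
      have hi2 : (i : ℕ) < k :=
        lt_of_lt_of_le (lt_of_lt_of_le i.2 hdl.le) (min_le_left _ _)
      have hget : x = l.get ⟨i.1, by omega⟩ := by
        rw [← hi]; simp
      have : x ≤ l.get ⟨k-1, hlen⟩ := by
        rw [hget]
        exact hl.rel_get_of_le (by simp; omega)
      simp only [decide_eq_true_eq]
      linarith
    have : k ≤ l.countP (fun x => decide (x ≤ t)) := by
      conv_rhs => rw [← List.take_append_drop k l, List.countP_append]
      omega
    omega

lemma kthSmallest_lt_iff {m : ℕ} (Y : Fin m → ℝ) {k : ℕ} (hk1 : 1 ≤ k) (hkm : k ≤ m) (t : ℝ) :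
    t < kthSmallest Y k ↔ (Finset.univ.filter (fun i => Y i ≤ t)).card < k := by
  classical
  set M := Multiset.map Y Finset.univ.val with hM
  set l := M.sort (· ≤ ·) with hl
  have hlenl : l.length = m := by
    rw [hl, Multiset.length_sort, hM, Multiset.card_map]
    simp
  have hsorted : l.Pairwise (· ≤ ·) := Multiset.pairwise_sort _ _
  have hlt : k - 1 < l.length := by omega
  have hget : kthSmallest Y k = l.get ⟨k-1, hlt⟩ := by
    rw [kthSmallest, ← hM, ← hl]; exact List.getD_eq_getElem l 0 hlt
  have hcount : l.countP (fun x => decide (x ≤ t))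
      = (Finset.univ.filter (fun i => Y i ≤ t)).card := by
    have h1 : l.countP (fun x => decide (x ≤ t)) = Multiset.countP (fun x => x ≤ t) M := by
      rw [← Multiset.coe_countP, hl, Multiset.sort_eq]
    rw [h1, hM, Multiset.countP_map]
    rfl
  rw [hget, sorted_countP_lt_iff hsorted hk1 hlt, hcount]

lemma kthSmallest_mem {m : ℕ} (Y : Fin m → ℝ) {k : ℕ} (hk1 : 1 ≤ k) (hkm : k ≤ m) :
    ∃ i, kthSmallest Y k = Y i := by
  classical
  set M := Multiset.map Y Finset.univ.val with hM
  set l := M.sort (· ≤ ·) with hl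
  have hlenl : l.length = m := by
    rw [hl, Multiset.length_sort, hM, Multiset.card_map]; simp
  have hlt : k - 1 < l.length := by omega
  have hget : kthSmallest Y k = l.get ⟨k-1, hlt⟩ := by
    rw [kthSmallest, ← hM, ← hl]; exact List.getD_eq_getElem l 0 hlt
  have hmem : l.get ⟨k-1, hlt⟩ ∈ M := by
    rw [← Multiset.mem_sort (· ≤ ·)]
    exact List.get_mem _ _
  rw [hM] at hmem
  obtain ⟨i, _, hi⟩ := Multiset.mem_map.mp hmem
  exact ⟨i, by rw [hget, ← hi]⟩

lemma expMeasure_apply {r : ℝ} {s : Set ℝ} (hs : MeasurableSet s) :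
    expMeasure r s = ∫⁻ x in s, exponentialPDF r x := by
  rw [expMeasure, gammaMeasure, withDensity_apply _ hs]
  rfl

lemma expMeasure_Iic {r : ℝ} (hr : 0 < r) {t : ℝ} (ht : 0 ≤ t) :
    expMeasure r (Set.Iic t) = ENNReal.ofReal (1 - rexp (-(r*t))) := by
  rw [expMeasure_apply measurableSet_Iic, lintegral_exponentialPDF_eq_antiDeriv hr t,
    if_pos ht]

lemma expMeasure_Ioi {r : ℝ} (hr : 0 < r) {t : ℝ} (ht : 0 ≤ t) :
    expMeasure r (Set.Ioi t) = ENNReal.ofReal (rexp (-(r*t))) := by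
  haveI := isProbabilityMeasure_expMeasure hr
  have hcompl : Set.Ioi t = (Set.Iic t)ᶜ := Set.compl_Iic.symm
  rw [hcompl, measure_compl measurableSet_Iic (measure_ne_top _ _), measure_univ,
    expMeasure_Iic hr ht]
  have hq0 : 0 ≤ rexp (-(r*t)) := (exp_pos _).le
  have hq1 : rexp (-(r*t)) ≤ 1 := exp_le_one_iff.mpr (by nlinarith)
  have hadd : ENNReal.ofReal (1 - rexp (-(r*t))) + ENNReal.ofReal (rexp (-(r*t))) = 1 := by
    rw [← ENNReal.ofReal_add (by linarith) hq0]
    norm_num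
  rw [← hadd, ENNReal.add_sub_cancel_left ENNReal.ofReal_ne_top]

lemma expMeasure_Iio_zero {r : ℝ} : expMeasure r (Set.Iio 0) = 0 := by
  rw [expMeasure_apply measurableSet_Iio]
  exact lintegral_exponentialPDF_of_nonpos le_rfl

lemma intOn_exp {c : ℝ} (hc : 0 < c) :
    IntegrableOn (fun t => rexp (-(c*t))) (Set.Ioi (0:ℝ)) := by
  simpa [neg_mul] using exp_neg_integrableOn_Ioi 0 hc

lemma integral_exp_neg_mul {c : ℝ} (hc : 0 < c) :
    ∫ t in Set.Ioi (0:ℝ), rexp (-(c*t)) = 1/c := by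
  have h := integral_comp_mul_left_Ioi (fun x => rexp (-x)) 0 hc
  simp only [mul_zero] at h
  rw [integral_exp_neg_Ioi] at h
  simpa [smul_eq_mul, one_div] using h

lemma hpt {μ : ℝ} {n j : ℕ} (hj : j < n) (t : ℝ) :
    (1 - rexp (-(μ*t)))^j * rexp (-(μ*t))^(n-j)
    = ∑ i ∈ Finset.range (j+1), (-1:ℝ)^i * (j.choose i) * rexp (-(((n-j+i:ℕ):ℝ)*μ*t)) := by
  set q := rexp (-(μ*t)) with hq
  have h1 : (1 - q)^j = ∑ i ∈ Finset.range (j+1), (-q)^i * 1^(j-i) * (j.choose i) := by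
    rw [← add_pow]; ring_nf
  rw [h1, Finset.sum_mul]
  refine Finset.sum_congr rfl (fun i hi => ?_)
  have hiq : q^(i + (n-j)) = rexp (-(((n-j+i:ℕ):ℝ)*μ*t)) := by
    rw [hq, ← Real.exp_nat_mul]
    congr 1
    push_cast [Nat.cast_sub hj.le]
    ring
  rw [← hiq, pow_add, neg_pow, one_pow]
  ring

lemma term_integral {μ : ℝ} (hμ : 0 < μ) {n j : ℕ} (hj : j < n) :
    ∫ t in Set.Ioi (0:ℝ), (1 - rexp (-(μ*t)))^j * rexp (-(μ*t))^(n-j)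
    = ∑ i ∈ Finset.range (j+1), (-1:ℝ)^i * (j.choose i) / (((n-j+i:ℕ):ℝ)*μ) := by
  rw [setIntegral_congr_fun measurableSet_Ioi (fun t _ => hpt hj t)]
  rw [integral_finset_sum _ (fun i hi => by
    have hc : (0:ℝ) < ((n-j+i:ℕ):ℝ)*μ := by
      apply mul_pos _ hμ
      have : 1 ≤ n - j + i := by omega
      exact_mod_cast Nat.lt_of_lt_of_le Nat.zero_lt_one this
    exact ((intOn_exp hc).const_mul _))]
  refine Finset.sum_congr rfl (fun i hi => ?_)
  have hc : (0:ℝ) < ((n-j+i:ℕ):ℝ)*μ := by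
    apply mul_pos _ hμ
    have : 1 ≤ n - j + i := by omega
    exact_mod_cast Nat.lt_of_lt_of_le Nat.zero_lt_one this
  rw [MeasureTheory.integral_const_mul, integral_exp_neg_mul hc]
  ring

end MDSaux

/-- **Expected download time for an (n,k)-MDS code, low-traffic regime.**
`S, X 0, …, X (n-2)` are mutually independent `Exp(μ)` service times; the request
completes at `T = min(S, X_{(k)})` where `X_{(k)}` is the `k`-th smallest of the
`X i`. Then `E[T] = k/(nμ)`. -/
theorem expected_download_time_MDS
    {Ω : Type*} [MeasurableSpace Ω] (Pr : Measure Ω) [IsProbabilityMeasure Pr]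
    (μ : ℝ) (hμ : 0 < μ) (n k : ℕ) (hk : 1 ≤ k) (hkn : k < n)
    (S : Ω → ℝ) (X : Fin (n - 1) → Ω → ℝ)
    (hSm : Measurable S) (hXm : ∀ i, Measurable (X i))
    (hindep : iIndepFun
      (fun o : Option (Fin (n - 1)) => o.elim S X) Pr)
    (hS : Pr.map S = expMeasure μ)
    (hX : ∀ i, Pr.map (X i) = expMeasure μ)
    (T : Ω → ℝ)
    (hT : T = fun ω => min (S ω) (kthSmallest (fun i => X i ω) k)) :
    ∫ ω, T ω ∂Pr = (k : ℝ) / ((n : ℝ) * μ) := by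
  classical
  have hkm : k ≤ n - 1 := by omega
  -- measurability of T
  have hcardsum : ∀ (t : ℝ) (ω : Ω),
      (Finset.univ.filter (fun i => X i ω ≤ t)).card
        = ∑ i : Fin (n-1), if X i ω ≤ t then 1 else 0 := fun t ω => Finset.card_filter _ _
  have hmeasT : Measurable T := by
    rw [hT]
    apply Measurable.min hSm
    apply measurable_of_Ioi
    intro t
    have hpre : (fun ω => kthSmallest (fun i => X i ω) k) ⁻¹' Set.Ioi t
        = (fun ω => ∑ i : Fin (n-1), if X i ω ≤ t then 1 else 0) ⁻¹' (Set.Iio k) := by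
      ext ω
      simp only [Set.mem_preimage, Set.mem_Ioi, Set.mem_Iio]
      rw [MDSaux.kthSmallest_lt_iff _ hk hkm, hcardsum t ω]
    rw [hpre]
    exact (Finset.measurable_sum Finset.univ (fun i _ =>
      Measurable.ite ((hXm i) measurableSet_Iic) measurable_const measurable_const))
      measurableSet_Iio
  -- a.e. nonnegativity
  have hae_nnS : ∀ᵐ ω ∂Pr, 0 ≤ S ω := by
    have h0 : Pr (S ⁻¹' Set.Iio 0) = 0 := by
      rw [← Measure.map_apply hSm measurableSet_Iio, hS, MDSaux.expMeasure_Iio_zero]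
    rw [ae_iff]
    have : {ω | ¬ 0 ≤ S ω} = S ⁻¹' Set.Iio 0 := by
      ext ω; simp [not_le]
    rw [this]; exact h0
  have hae_nnX : ∀ᵐ ω ∂Pr, ∀ i, 0 ≤ X i ω := by
    rw [ae_all_iff]
    intro i
    have h0 : Pr (X i ⁻¹' Set.Iio 0) = 0 := by
      rw [← Measure.map_apply (hXm i) measurableSet_Iio, hX i, MDSaux.expMeasure_Iio_zero]
    rw [ae_iff]
    have : {ω | ¬ 0 ≤ X i ω} = X i ⁻¹' Set.Iio 0 := by
      ext ω; simp [not_le]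
    rw [this]; exact h0
  have hae_nnT : ∀ᵐ ω ∂Pr, 0 ≤ T ω := by
    filter_upwards [hae_nnS, hae_nnX] with ω h1 h2
    rw [hT]
    refine le_min h1 ?_
    obtain ⟨i, hi⟩ := MDSaux.kthSmallest_mem (fun i => X i ω) hk hkm
    rw [hi]; exact h2 i
  -- the tail density function
  set h : ℝ → ℝ := fun t => ∑ j ∈ Finset.range k,
    ((n-1).choose j : ℝ) * ((1 - Real.exp (-(μ*t)))^j * Real.exp (-(μ*t))^(n-j)) with hh
  -- tail probability formula
  have htail : ∀ t : ℝ, 0 < t → Pr {ω | t < T ω} = ENNReal.ofReal (h t) := by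
    intro t ht
    have hq0 : 0 ≤ Real.exp (-(μ*t)) := (Real.exp_pos _).le
    have hq1 : Real.exp (-(μ*t)) ≤ 1 := Real.exp_le_one_iff.mpr (by nlinarith)
    set E : Finset (Fin (n-1)) → Set Ω := fun A =>
      (S ⁻¹' Set.Ioi t) ∩ ⋂ i, X i ⁻¹' (if i ∈ A then Set.Iic t else Set.Ioi t) with hE
    have hEmeas : ∀ A, MeasurableSet (E A) := fun A =>
      ((hSm measurableSet_Ioi).inter (MeasurableSet.iInter (fun i => (hXm i) (by
        split_ifs
        exacts [measurableSet_Iic, measurableSet_Ioi]))))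
    have hmem_i : ∀ (A : Finset (Fin (n-1))) (ω : Ω) (i : Fin (n-1)),
        X i ω ∈ (if i ∈ A then Set.Iic t else Set.Ioi t) ↔ (X i ω ≤ t ↔ i ∈ A) := by
      intro A ω i
      split_ifs with hiA <;> simp [hiA, Set.mem_Iic, Set.mem_Ioi, not_le]
    have hmemE : ∀ (A : Finset (Fin (n-1))) (ω : Ω),
        ω ∈ E A ↔ (t < S ω ∧ ∀ i, (X i ω ≤ t ↔ i ∈ A)) := by
      intro A ω
      rw [hE]
      simp only [Set.mem_inter_iff, Set.mem_preimage, Set.mem_Ioi, Set.mem_iInter]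
      constructor
      · rintro ⟨h1, h2⟩
        exact ⟨h1, fun i => (hmem_i A ω i).mp (h2 i)⟩
      · rintro ⟨h1, h2⟩
        exact ⟨h1, fun i => (hmem_i A ω i).mpr (h2 i)⟩
    -- measure of E A
    have hPrE : ∀ A : Finset (Fin (n-1)),
        Pr (E A) = ENNReal.ofReal
          ((1 - Real.exp (-(μ*t)))^A.card * Real.exp (-(μ*t))^(n - A.card)) := by
      intro A
      set sets : Option (Fin (n-1)) → Set ℝ := fun o =>
        o.elim (Set.Ioi t) (fun i => if i ∈ A then Set.Iic t else Set.Ioi t) with hsets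
      have hsets_meas : ∀ o, MeasurableSet (sets o) := by
        rintro (_|i)
        · exact measurableSet_Ioi
        · show MeasurableSet (if i ∈ A then Set.Iic t else Set.Ioi t)
          split_ifs
          exacts [measurableSet_Iic, measurableSet_Ioi]
      have hinter : (⋂ o ∈ (Finset.univ : Finset (Option (Fin (n-1)))),
          (fun o : Option (Fin (n-1)) => o.elim S X) o ⁻¹' sets o) = E A := by
        ext ω
        constructor
        · intro hw
          have hw' : ∀ o : Option (Fin (n-1)),
              ω ∈ (fun o : Option (Fin (n-1)) => o.elim S X) o ⁻¹' sets o :=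
            fun o => Set.mem_iInter₂.mp hw o (Finset.mem_univ o)
          exact ⟨hw' none, Set.mem_iInter.mpr (fun i => hw' (some i))⟩
        · rintro ⟨h1, h2⟩
          apply Set.mem_iInter₂.mpr
          rintro (_|i) _
          · exact h1
          · exact Set.mem_iInter.mp h2 i
      have hprod := hindep.measure_inter_preimage_eq_mul Finset.univ
        (sets := sets) (fun o _ => hsets_meas o)
      rw [hinter] at hprod
      rw [hprod, Fintype.prod_option]
      have hnone : Pr (S ⁻¹' Set.Ioi t) = ENNReal.ofReal (Real.exp (-(μ*t))) := by
        rw [← Measure.map_apply hSm measurableSet_Ioi, hS, MDSaux.expMeasure_Ioi hμ ht.le]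
      have hsome : ∀ i : Fin (n-1), Pr (X i ⁻¹' (if i ∈ A then Set.Iic t else Set.Ioi t))
          = if i ∈ A then ENNReal.ofReal (1 - Real.exp (-(μ*t)))
            else ENNReal.ofReal (Real.exp (-(μ*t))) := by
        intro i
        split_ifs with hiA
        · rw [← Measure.map_apply (hXm i) measurableSet_Iic, hX i,
            MDSaux.expMeasure_Iic hμ ht.le]
        · rw [← Measure.map_apply (hXm i) measurableSet_Ioi, hX i,
            MDSaux.expMeasure_Ioi hμ ht.le]
      have hsome' : ∏ i : Fin (n-1), Pr ((fun o : Option (Fin (n-1)) =>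
            o.elim S X) (some i) ⁻¹' sets (some i))
          = ∏ i : Fin (n-1), (if i ∈ A then ENNReal.ofReal (1 - Real.exp (-(μ*t)))
            else ENNReal.ofReal (Real.exp (-(μ*t)))) :=
        Finset.prod_congr rfl (fun i _ => hsome i)
      have hAcard : A.card ≤ n - 1 := by
        simpa using Finset.card_le_univ A
      rw [show Pr ((fun o : Option (Fin (n-1)) => o.elim S X) none ⁻¹' sets none)
          = ENNReal.ofReal (Real.exp (-(μ*t))) from hnone, hsome']
      rw [Finset.prod_ite, Finset.prod_const, Finset.prod_const]
      have hc1 : (Finset.univ.filter (fun i : Fin (n-1) => i ∈ A)).card = A.card := by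
        congr 1
        ext i
        simp
      have hc2 : (Finset.univ.filter (fun i : Fin (n-1) => ¬ i ∈ A)).card = (n-1) - A.card := by
        have he : Finset.univ.filter (fun i : Fin (n-1) => ¬ i ∈ A) = Aᶜ := by
          ext i; simp
        rw [he, Finset.card_compl]
        simp
      rw [hc1, hc2]
      rw [← ENNReal.ofReal_pow (by linarith), ← ENNReal.ofReal_pow hq0,
        ← ENNReal.ofReal_mul (pow_nonneg (by linarith) _), ← ENNReal.ofReal_mul hq0]
      congr 1
      rw [show n - A.card = ((n-1) - A.card) + 1 by omega, pow_succ]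
      ring
    -- the union decomposition
    set 𝒜 : Finset (Finset (Fin (n-1))) :=
      (Finset.range k).biUnion (fun j => Finset.powersetCard j Finset.univ) with h𝒜
    have hmem𝒜 : ∀ A : Finset (Fin (n-1)), A ∈ 𝒜 ↔ A.card < k := by
      intro A
      rw [h𝒜]
      simp only [Finset.mem_biUnion, Finset.mem_range, Finset.mem_powersetCard]
      constructor
      · rintro ⟨j, hj, _, hc⟩; omega
      · intro hc; exact ⟨A.card, hc, Finset.subset_univ A, rfl⟩
    have hunion : {ω | t < T ω} = ⋃ A ∈ 𝒜, E A := by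
      ext ω
      simp only [Set.mem_setOf_eq, Set.mem_iUnion, exists_prop]
      rw [hT]
      simp only
      rw [lt_min_iff, MDSaux.kthSmallest_lt_iff _ hk hkm]
      constructor
      · rintro ⟨h1, h2⟩
        refine ⟨Finset.univ.filter (fun i => X i ω ≤ t), (hmem𝒜 _).mpr h2, ?_⟩
        rw [hmemE]
        exact ⟨h1, fun i => by simp⟩
      · rintro ⟨A, hA, hω⟩
        rw [hmemE] at hω
        have hfil : Finset.univ.filter (fun i => X i ω ≤ t) = A := by
          ext i
          simp only [Finset.mem_filter, Finset.mem_univ, true_and]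
          exact hω.2 i
        exact ⟨hω.1, by rw [hfil]; exact (hmem𝒜 _).mp hA⟩
    have hdisj : (↑𝒜 : Set (Finset (Fin (n-1)))).Pairwise (Function.onFun Disjoint E) := by
      intro A hA B hB hAB
      rw [Function.onFun, Set.disjoint_left]
      intro ω hωA hωB
      apply hAB
      rw [hmemE] at hωA hωB
      ext i
      have h1 := hωA.2 i
      have h2 := hωB.2 i
      tauto
    rw [hunion, measure_biUnion_finset hdisj (fun A _ => hEmeas A)]
    have hdisj2 : ∀ j1 ∈ (Finset.range k : Finset ℕ), ∀ j2 ∈ (Finset.range k : Finset ℕ),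
        j1 ≠ j2 → Disjoint (Finset.powersetCard j1 (Finset.univ : Finset (Fin (n-1))))
          (Finset.powersetCard j2 Finset.univ) := by
      intro j1 _ j2 _ hne
      rw [Finset.disjoint_left]
      intro A hA1 hA2
      rw [Finset.mem_powersetCard] at hA1 hA2
      exact hne (hA1.2.symm.trans hA2.2)
    rw [h𝒜, Finset.sum_biUnion hdisj2]
    have hsum_j : ∀ j ∈ Finset.range k,
        ∑ A ∈ Finset.powersetCard j (Finset.univ : Finset (Fin (n-1))), Pr (E A)
        = ENNReal.ofReal (((n-1).choose j : ℝ)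
            * ((1 - Real.exp (-(μ*t)))^j * Real.exp (-(μ*t))^(n-j))) := by
      intro j hj
      have hcongr : ∀ A ∈ Finset.powersetCard j (Finset.univ : Finset (Fin (n-1))),
          Pr (E A) = ENNReal.ofReal ((1 - Real.exp (-(μ*t)))^j * Real.exp (-(μ*t))^(n-j)) := by
        intro A hA
        rw [hPrE A, (Finset.mem_powersetCard.mp hA).2]
      rw [Finset.sum_congr rfl hcongr, Finset.sum_const, Finset.card_powersetCard,
        Finset.card_univ, Fintype.card_fin, nsmul_eq_mul]
      rw [← ENNReal.ofReal_natCast ((n-1).choose j),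
        ← ENNReal.ofReal_mul (by positivity)]
    rw [Finset.sum_congr rfl hsum_j,
      ← ENNReal.ofReal_sum_of_nonneg (fun j hj => by
        have h0 : (0:ℝ) ≤ (1 - Real.exp (-(μ*t)))^j * Real.exp (-(μ*t))^(n-j) :=
          mul_nonneg (pow_nonneg (by linarith) _) (pow_nonneg hq0 _)
        exact mul_nonneg (Nat.cast_nonneg _) h0)]
  -- integrability of the terms
  have hint_term : ∀ j, j < k →
      IntegrableOn (fun t => (1 - Real.exp (-(μ*t)))^j * Real.exp (-(μ*t))^(n-j))
        (Set.Ioi (0:ℝ)) := by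
    intro j hj
    refine Integrable.mono' (MDSaux.intOn_exp hμ) ?_ ?_
    · apply Continuous.aestronglyMeasurable
      fun_prop
    · filter_upwards [ae_restrict_mem measurableSet_Ioi] with t ht
      have ht0 : (0:ℝ) < t := ht
      have hq0 : 0 ≤ Real.exp (-(μ*t)) := (Real.exp_pos _).le
      have hq1 : Real.exp (-(μ*t)) ≤ 1 := Real.exp_le_one_iff.mpr (by nlinarith)
      rw [Real.norm_eq_abs, abs_of_nonneg (mul_nonneg (pow_nonneg (by linarith) _)
        (pow_nonneg hq0 _))]
      calc (1 - Real.exp (-(μ*t)))^j * Real.exp (-(μ*t))^(n-j)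
          ≤ 1 * Real.exp (-(μ*t))^(n-j) := by
            apply mul_le_mul_of_nonneg_right _ (pow_nonneg hq0 _)
            exact pow_le_one₀ (by linarith) (by linarith)
        _ ≤ Real.exp (-(μ*t))^1 := by
            rw [one_mul]
            exact pow_le_pow_of_le_one hq0 hq1 (by omega)
        _ = Real.exp (-(μ*t)) := pow_one _
  have hint_h : IntegrableOn h (Set.Ioi (0:ℝ)) := by
    rw [hh]
    apply MeasureTheory.integrable_finset_sum
    intro j hj
    exact ((hint_term j (Finset.mem_range.mp hj)).const_mul _)
  -- value of the integral of h
  have hIh : ∫ t in Set.Ioi (0:ℝ), h t = (k:ℝ) / ((n:ℝ)*μ) := by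
    rw [hh]
    rw [MeasureTheory.integral_finset_sum _
      (fun j hj => (hint_term j (Finset.mem_range.mp hj)).const_mul _)]
    have hterm : ∀ j ∈ Finset.range k,
        ∫ t in Set.Ioi (0:ℝ),
          ((n-1).choose j : ℝ) * ((1 - Real.exp (-(μ*t)))^j * Real.exp (-(μ*t))^(n-j))
        = 1/((n:ℝ)*μ) := by
      intro j hj
      rw [MeasureTheory.integral_const_mul,
        MDSaux.term_integral hμ (show j < n by
          have := Finset.mem_range.mp hj; omega)]
      exact MDSaux.coeff_eq hμ (Finset.mem_range.mp hj) hkn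
    rw [Finset.sum_congr rfl hterm, Finset.sum_const, Finset.card_range, nsmul_eq_mul]
    ring
  -- nonnegativity of h on Ioi 0
  have hh_nn : 0 ≤ᵐ[(volume : Measure ℝ).restrict (Set.Ioi 0)] h := by
    filter_upwards [ae_restrict_mem measurableSet_Ioi] with t ht
    have ht0 : (0:ℝ) < t := ht
    have hq0 : 0 ≤ Real.exp (-(μ*t)) := (Real.exp_pos _).le
    have hq1 : Real.exp (-(μ*t)) ≤ 1 := Real.exp_le_one_iff.mpr (by nlinarith)
    rw [hh]
    apply Finset.sum_nonneg
    intro j hj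
    have h0 : (0:ℝ) ≤ (1 - Real.exp (-(μ*t)))^j * Real.exp (-(μ*t))^(n-j) :=
      mul_nonneg (pow_nonneg (by linarith) _) (pow_nonneg hq0 _)
    exact mul_nonneg (Nat.cast_nonneg _) h0
  -- put everything together
  rw [MeasureTheory.integral_eq_lintegral_of_nonneg_ae hae_nnT hmeasT.aestronglyMeasurable]
  rw [MeasureTheory.lintegral_eq_lintegral_meas_lt Pr hae_nnT hmeasT.aemeasurable]
  have hcongr : ∫⁻ t in Set.Ioi (0:ℝ), Pr {ω | t < T ω}
      = ∫⁻ t in Set.Ioi (0:ℝ), ENNReal.ofReal (h t) := by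
    apply setLIntegral_congr_fun measurableSet_Ioi
    exact (fun t ht => htail t ht)
  rw [hcongr, ← MeasureTheory.ofReal_integral_eq_lintegral_ofReal hint_h hh_nn]
  rw [hIh, ENNReal.toReal_ofReal (by positivity)]
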